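/- If A is a canonical n×m binary matrix with first-row value x_1, then x_1 = 2^s − 1 where s = ε_1(A) is the number of 1's in the first row of A. -/

import Mathlib

/-- The value of a row of length `m` read as a binary number (most significant digit first). -/
def rowVal (m : ℕ) (row : Fin m → Bool) : ℕ :=
  ∑ j : Fin m, (row j).toNat * 2 ^ (m - 1 - (j : ℕ))

/-- `r(A)`: the tuple of row values of a binary matrix. -/
def rtup {n m : ℕ} (A : Fin n → Fin m → Bool) : Fin n → ℕ :=
  fun i => rowVal m (A i)

/-- `c(A)`: the tuple of column values of a binary matrix. -/
def ctup {n m : ℕ} (A : Fin n → Fin m → Bool) : Fin m → ℕ :=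
  fun j => rowVal n (fun i => A i j)

/-- `A ∼ B`: `B` is obtained from `A` by permuting rows and columns. -/
def MatEquiv {n m : ℕ} (A B : Fin n → Fin m → Bool) : Prop :=
  ∃ (ρ : Equiv.Perm (Fin n)) (σ : Equiv.Perm (Fin m)), ∀ i j, B i j = A (ρ i) (σ j)

/-- `A` is semi-canonical: both `r(A)` and `c(A)` are weakly increasing. -/
def SemiCanonical {n m : ℕ} (A : Fin n → Fin m → Bool) : Prop :=
  Monotone (rtup A) ∧ Monotone (ctup A)

/-- `A` is canonical: `r(A)` is the lexicographic minimum over the equivalence class of `A`. -/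
def Canonical {n m : ℕ} (A : Fin n → Fin m → Bool) : Prop :=
  ∀ B, MatEquiv A B → toLex (rtup A) ≤ toLex (rtup B)

lemma two_pow_card_le_aux (T : Finset ℕ) : 2 ^ T.card ≤ (∑ t ∈ T, 2 ^ t) + 1 := by
  induction T using Finset.induction_on_max with
  | empty => simp
  | insert a s ha ih =>
    have hs : s ⊆ Finset.range a := fun x hx => Finset.mem_range.mpr (ha x hx)
    have hcard : s.card ≤ a := by simpa using Finset.card_le_card hs
    have hns : a ∉ s := fun h => lt_irrefl a (ha a h)
    rw [Finset.card_insert_of_notMem hns, Finset.sum_insert hns]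
    have h1 : 2 ^ s.card ≤ 2 ^ a := Nat.pow_le_pow_right (by norm_num) hcard
    calc 2 ^ (s.card + 1) = 2 ^ s.card + 2 ^ s.card := by ring
    _ ≤ 2 ^ a + ((∑ t ∈ s, 2 ^ t) + 1) := Nat.add_le_add h1 ih
    _ = _ := by ring

lemma rowVal_lower (m : ℕ) (row : Fin m → Bool) :
    2 ^ (∑ j : Fin m, (row j).toNat) ≤ rowVal m row + 1 := by
  classical
  set T : Finset (Fin m) := Finset.univ.filter (fun j => row j = true) with hT
  have hcard : ∑ j : Fin m, (row j).toNat = T.card := by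
    rw [hT, Finset.card_filter]
    exact Finset.sum_congr rfl (fun j _ => by cases h : row j <;> simp [h])
  have hval : rowVal m row = ∑ j ∈ T, 2 ^ (m - 1 - (j : ℕ)) := by
    rw [rowVal, hT, Finset.sum_filter]
    exact Finset.sum_congr rfl (fun j _ => by cases h : row j <;> simp [h])
  have hinj : Set.InjOn (fun j : Fin m => m - 1 - (j : ℕ)) T := by
    intro a _ b _ hab
    have ha := a.isLt; have hb := b.isLt
    exact Fin.ext (by simp only at hab; omega)
  have himg : ∑ j ∈ T, 2 ^ (m - 1 - (j : ℕ))
      = ∑ t ∈ T.image (fun j : Fin m => m - 1 - (j : ℕ)), 2 ^ t :=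
    (Finset.sum_image (fun a ha b hb h => hinj ha hb h)).symm
  have hc : (T.image (fun j : Fin m => m - 1 - (j : ℕ))).card = T.card :=
    Finset.card_image_of_injOn hinj
  rw [hcard, hval, himg, ← hc]
  exact two_pow_card_le_aux _

lemma sum_range_two_pow (k : ℕ) : ∑ j ∈ Finset.range k, 2 ^ j = 2 ^ k - 1 := by
  induction k with
  | zero => simp
  | succ k ih =>
    rw [Finset.sum_range_succ, ih, pow_succ]
    have : 1 ≤ 2 ^ k := Nat.one_le_two_pow
    omega

lemma rowVal_of_monotone (m : ℕ) (g : Fin m → Bool) (hg : Monotone g) :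
    rowVal m g = 2 ^ (∑ j : Fin m, (g j).toNat) - 1 := by
  classical
  set k := ∑ j : Fin m, (g j).toNat with hk
  have hkm : k ≤ m := by
    rw [hk]
    calc ∑ j : Fin m, (g j).toNat ≤ ∑ _j : Fin m, 1 :=
      Finset.sum_le_sum (fun j _ => by cases g j <;> simp)
    _ = m := by simp
  set T : Finset (Fin m) := Finset.univ.filter (fun j => g j = true) with hT
  have hcard : k = T.card := by
    rw [hk, hT, Finset.card_filter]
    exact Finset.sum_congr rfl (fun j _ => by cases h : g j <;> simp [h])
  have hiff : ∀ j : Fin m, g j = true ↔ m - k ≤ (j : ℕ) := by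
    intro j
    constructor
    · intro h
      have hsub : Finset.Ici j ⊆ T := by
        intro j' hj'
        rw [hT, Finset.mem_filter]
        refine ⟨Finset.mem_univ _, ?_⟩
        have := hg (Finset.mem_Ici.mp hj')
        rw [h] at this
        exact le_antisymm (Bool.le_true _) this
      have := Finset.card_le_card hsub
      rw [Fin.card_Ici] at this
      have := j.isLt
      omega
    · intro h
      by_contra hgj
      have hgj' : g j = false := by
        cases hg' : g j
        · rfl
        · exact absurd hg' hgj
      have hsub : T ⊆ Finset.Ioi j := by
        intro j' hj'
        rw [hT, Finset.mem_filter] at hj'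
        rw [Finset.mem_Ioi]
        by_contra hle
        push_neg at hle
        have := hg hle
        rw [hj'.2, hgj'] at this
        exact absurd this (by simp)
      have := Finset.card_le_card hsub
      rw [Fin.card_Ioi] at this
      have := j.isLt
      omega
  have hrow : rowVal m g = ∑ j ∈ Finset.range m,
      (if m - k ≤ j then 2 ^ (m - 1 - j) else 0) := by
    rw [rowVal, ← Fin.sum_univ_eq_sum_range (fun j : ℕ => if m - k ≤ j then 2 ^ (m - 1 - j) else 0) m]
    refine Finset.sum_congr rfl (fun j _ => ?_)
    cases h : g j
    · have : ¬ (m - k ≤ (j : ℕ)) := fun hh => by rw [(hiff j).mpr hh] at h; exact absurd h (by simp)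
      simp [this]
    · have : m - k ≤ (j : ℕ) := (hiff j).mp h
      simp [this]
  have hrefl := Finset.sum_range_reflect (fun j => if m - k ≤ j then 2 ^ (m - 1 - j) else 0) m
  have hrow2 : rowVal m g = ∑ j ∈ Finset.range m, (if j < k then 2 ^ j else 0) := by
    rw [hrow, ← hrefl]
    refine Finset.sum_congr rfl (fun j hj => ?_)
    have hjm := Finset.mem_range.mp hj
    by_cases hc : j < k
    · have h1 : m - k ≤ m - 1 - j := by omega
      have h2 : m - 1 - (m - 1 - j) = j := by omega
      simp [h1, h2, hc]
    · have h1 : ¬ (m - k ≤ m - 1 - j) := by omega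
      simp [h1, hc]
  have hfilt : (Finset.range m).filter (fun j => j < k) = Finset.range k := by
    ext x
    simp only [Finset.mem_filter, Finset.mem_range]
    omega
  rw [hrow2, ← Finset.sum_filter, hfilt, sum_range_two_pow]

lemma lex_head_le {n : ℕ} {f g : Fin (n + 1) → ℕ} (h : toLex f ≤ toLex g) : f 0 ≤ g 0 := by
  rcases h.lt_or_eq with h | h
  · obtain ⟨i, hi, hlt⟩ := h
    rcases eq_or_lt_of_le (Fin.zero_le i) with rfl | hpos
    · exact le_of_lt hlt
    · exact le_of_eq (hi 0 hpos)
  · exact le_of_eq (congrFun (toLex.injective h) 0)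

theorem canonical_first_row_value {n m : ℕ} (A : Fin (n + 1) → Fin m → Bool)
    (hA : Canonical A) :
    rtup A 0 = 2 ^ (∑ j : Fin m, (A 0 j).toNat) - 1 := by
  classical
  set s := ∑ j : Fin m, (A 0 j).toNat with hs
  have hlow : 2 ^ s ≤ rtup A 0 + 1 := rowVal_lower m (A 0)
  set σ := Tuple.sort (A 0) with hσ
  set B : Fin (n + 1) → Fin m → Bool := fun i j => A i (σ j) with hB
  have hEq : MatEquiv A B := ⟨Equiv.refl _, σ, fun i j => rfl⟩
  have h0 : rtup A 0 ≤ rtup B 0 := lex_head_le (hA B hEq)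
  have hsum : ∑ j : Fin m, (B 0 j).toNat = s := by
    rw [hs]
    exact Equiv.sum_comp σ (fun j => (A 0 j).toNat)
  have hmono : Monotone (B 0) := Tuple.monotone_sort (A 0)
  have hBval : rtup B 0 = 2 ^ s - 1 := by
    rw [show rtup B 0 = rowVal m (B 0) from rfl, rowVal_of_monotone m (B 0) hmono, hsum]
  have hpos : 1 ≤ 2 ^ s := Nat.one_le_two_pow
  omega
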